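/- Let {ρ_k}_{k∈K} be a finite ensemble of positive semidefinite operators on a finite-dimensional Hilbert space H with Σ_k Tr ρ_k = 1. Define the quadratically-weighted measurement M_k^{QW} = S^{-1/2⁺} ρ_k² S^{-1/2⁺}, where S = Σ_ℓ ρ_ℓ². Then {M_k^{QW}} is a POVM (each M_k^{QW} ≥ 0 and Σ_k M_k^{QW} ≤ 1) and its success probability satisfies Σ_k Tr(M_k^{QW} ρ_k) ≥ Λ², where Λ = Tr√S. -/

import Mathlib

open Matrix ComplexOrder

section Helpers

variable {n : Type*} [Fintype n] [DecidableEq n]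

omit [DecidableEq n] in
lemma trace_conjTranspose_mul_eq' (A B : Matrix n n ℂ) :
    (Aᴴ * B).trace = ∑ p : n × n, (starRingEnd ℂ) (A p.1 p.2) * B p.1 p.2 := by
  rw [Fintype.sum_prod_type, Matrix.trace]
  simp only [Matrix.diag, Matrix.mul_apply, Matrix.conjTranspose_apply]
  exact Finset.sum_comm

omit [DecidableEq n] in
lemma trace_cs' (A B : Matrix n n ℂ) :
    ((Aᴴ * B).trace.re) ^ 2 ≤ (Aᴴ * A).trace.re * (Bᴴ * B).trace.re := by
  let x : EuclideanSpace ℂ (n × n) := WithLp.toLp 2 (fun p : n × n => A p.1 p.2)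
  let y : EuclideanSpace ℂ (n × n) := WithLp.toLp 2 (fun p : n × n => B p.1 p.2)
  have hxy : (Aᴴ * B).trace = inner ℂ x y := by
    rw [trace_conjTranspose_mul_eq', PiLp.inner_apply]
    simp [RCLike.inner_apply, x, y]
    exact Finset.sum_congr rfl fun _ _ => mul_comm _ _
  have hxx : (Aᴴ * A).trace.re = ‖x‖ ^ 2 := by
    rw [← inner_self_eq_norm_sq (𝕜 := ℂ)]
    rw [trace_conjTranspose_mul_eq', PiLp.inner_apply]
    simp [RCLike.inner_apply, x]
    refine Finset.sum_congr rfl fun p _ => ?_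
    rw [← Complex.ofReal_pow, Complex.ofReal_re, ← Complex.normSq_eq_norm_sq, Complex.normSq_apply]
  have hyy : (Bᴴ * B).trace.re = ‖y‖ ^ 2 := by
    rw [← inner_self_eq_norm_sq (𝕜 := ℂ)]
    rw [trace_conjTranspose_mul_eq', PiLp.inner_apply]
    simp [RCLike.inner_apply, y]
    refine Finset.sum_congr rfl fun p _ => ?_
    rw [← Complex.ofReal_pow, Complex.ofReal_re, ← Complex.normSq_eq_norm_sq, Complex.normSq_apply]
  rw [hxy, hxx, hyy]
  calc ((inner ℂ x y : ℂ)).re ^ 2 ≤ ‖(inner ℂ x y : ℂ)‖ ^ 2 := by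
        have h1 := Complex.abs_re_le_norm (inner ℂ x y : ℂ)
        nlinarith [norm_nonneg (inner ℂ x y : ℂ), abs_nonneg (inner ℂ x y : ℂ).re,
          le_abs_self (inner ℂ x y : ℂ).re, neg_abs_le (inner ℂ x y : ℂ).re]
    _ ≤ (‖x‖ * ‖y‖) ^ 2 := by
        have := norm_inner_le_norm (𝕜 := ℂ) x y
        nlinarith [norm_nonneg x, norm_nonneg y, norm_nonneg (inner ℂ x y : ℂ)]
    _ = ‖x‖ ^ 2 * ‖y‖ ^ 2 := by ring

omit [DecidableEq n] in
lemma trace_conjTranspose_mul_self_re_nonneg' (A : Matrix n n ℂ) :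
    0 ≤ (Aᴴ * A).trace.re := by
  rw [trace_conjTranspose_mul_eq', Complex.re_sum]
  apply Finset.sum_nonneg
  intro p _
  simp only [Complex.mul_re, Complex.conj_re, Complex.conj_im]
  nlinarith [sq_nonneg (A p.1 p.2).re, sq_nonneg (A p.1 p.2).im]

lemma sqrt_inv_mul_self {r : ℝ} (hr : 0 ≤ r) : (Real.sqrt r)⁻¹ * r = Real.sqrt r := by
  rcases eq_or_lt_of_le hr with h | h
  · simp [← h]
  · have hs : Real.sqrt r ≠ 0 := ne_of_gt (Real.sqrt_pos.mpr h)
    field_simp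
    exact (Real.sq_sqrt hr).symm

end Helpers

/-- The pseudo-inverse square root `B^{-1/2⁺}` of a Hermitian matrix `B`:
only strictly positive eigenvalues are inverted (since `(Real.sqrt λ)⁻¹ = 0` for `λ ≤ 0`). -/
noncomputable def pinvSqrt {n : Type*} [Fintype n] [DecidableEq n]
    {B : Matrix n n ℂ} (hB : B.IsHermitian) : Matrix n n ℂ :=
  (hB.eigenvectorUnitary : Matrix n n ℂ) *
    Matrix.diagonal (fun i => (((Real.sqrt (hB.eigenvalues i))⁻¹ : ℝ) : ℂ)) *
    ((hB.eigenvectorUnitary : Matrix n n ℂ))ᴴ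

/-- The positive semidefinite square root of a positive semidefinite matrix -/
noncomputable def Matrix.PosSemidef.sqrt {n : Type*} [Fintype n] {𝕜 : Type*} [RCLike 𝕜]
    [DecidableEq n] {A : Matrix n n 𝕜} (hA : A.PosSemidef) : Matrix n n 𝕜 :=
  hA.1.eigenvectorUnitary.1 * diagonal ((↑) ∘ (√·) ∘ hA.1.eigenvalues) *
    (star hA.1.eigenvectorUnitary : Matrix n n 𝕜)

/-- The quadratically-weighted measurement `M_k^{QW} = S^{-1/2⁺} ρ_k² S^{-1/2⁺}`,
with `S = Σ_ℓ ρ_ℓ²`, is a POVM, and its success probability is at least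
`Λ² = (Tr √S)²`. -/
theorem quadratically_weighted_measurement_bound
    {n K : Type*} [Fintype n] [DecidableEq n] [Fintype K]
    (ρ : K → Matrix n n ℂ) (hρ : ∀ k, (ρ k).PosSemidef)
    (hnorm : (∑ k, (ρ k).trace) = 1)
    (hS : (∑ k, (ρ k) ^ 2).PosSemidef) :
    (∀ k, (pinvSqrt hS.isHermitian * (ρ k) ^ 2 * pinvSqrt hS.isHermitian).PosSemidef) ∧
    ((1 : Matrix n n ℂ) -
        ∑ k, pinvSqrt hS.isHermitian * (ρ k) ^ 2 * pinvSqrt hS.isHermitian).PosSemidef ∧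
    (hS.sqrt.trace.re) ^ 2 ≤
      (∑ k, (pinvSqrt hS.isHermitian * (ρ k) ^ 2 * pinvSqrt hS.isHermitian *
        (ρ k)).trace).re := by
  classical
  have hH : (∑ k, (ρ k) ^ 2).IsHermitian := hS.isHermitian
  set U : Matrix n n ℂ := (hS.isHermitian.eigenvectorUnitary : Matrix n n ℂ) with hUdef
  set lam : n → ℝ := hS.isHermitian.eigenvalues with hlamdef
  set g : n → ℝ := fun i => (Real.sqrt (lam i))⁻¹ with hgdef
  have hU1 : Uᴴ * U = 1 := by
    rw [hUdef, ← Matrix.star_eq_conjTranspose]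
    exact Matrix.mem_unitaryGroup_iff'.mp hS.isHermitian.eigenvectorUnitary.2
  have hU2 : U * Uᴴ = 1 := by
    rw [hUdef, ← Matrix.star_eq_conjTranspose]
    exact Matrix.mem_unitaryGroup_iff.mp hS.isHermitian.eigenvectorUnitary.2
  have key : ∀ d e : n → ℂ, (U * Matrix.diagonal d * Uᴴ) * (U * Matrix.diagonal e * Uᴴ)
      = U * Matrix.diagonal (fun i => d i * e i) * Uᴴ := by
    intro d e
    simp only [mul_assoc]
    rw [← mul_assoc Uᴴ U, hU1, one_mul, ← mul_assoc (Matrix.diagonal d) (Matrix.diagonal e),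
      Matrix.diagonal_mul_diagonal]
  have trU : ∀ d : n → ℂ, (U * Matrix.diagonal d * Uᴴ).trace = ∑ i, d i := by
    intro d
    rw [Matrix.trace_mul_cycle, hU1, one_mul, Matrix.trace_diagonal]
  have hPdef : pinvSqrt hS.isHermitian
      = U * Matrix.diagonal (fun i => ((g i : ℝ) : ℂ)) * Uᴴ := rfl
  have hlm : ∀ i, 0 ≤ lam i := fun i => hS.eigenvalues_nonneg i
  have psdU : ∀ r : n → ℝ, (∀ i, 0 ≤ r i) →
      (U * Matrix.diagonal (fun i => ((r i : ℝ) : ℂ)) * Uᴴ).PosSemidef := by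
    intro r hr
    exact Matrix.PosSemidef.mul_mul_conjTranspose_same
      (Matrix.posSemidef_diagonal_iff.mpr (fun i => Complex.zero_le_real.mpr (hr i))) U
  have hPH : (pinvSqrt hS.isHermitian).IsHermitian := by
    rw [hPdef]
    exact (psdU g (fun i => inv_nonneg.mpr (Real.sqrt_nonneg _))).1
  have spec : (∑ k, (ρ k) ^ 2)
      = U * Matrix.diagonal (fun i => ((lam i : ℝ) : ℂ)) * Uᴴ := by
    convert hS.isHermitian.spectral_theorem using 2
    rfl
  -- Part 1
  have part1 : ∀ k, (pinvSqrt hS.isHermitian * (ρ k) ^ 2 * pinvSqrt hS.isHermitian).PosSemidef := by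
    intro k
    have h1 : (ρ k * pinvSqrt hS.isHermitian)ᴴ * (ρ k * pinvSqrt hS.isHermitian)
        = pinvSqrt hS.isHermitian * (ρ k) ^ 2 * pinvSqrt hS.isHermitian := by
      rw [Matrix.conjTranspose_mul, hPH.eq, (hρ k).1.eq, pow_two]
      simp only [mul_assoc]
    exact h1 ▸ Matrix.posSemidef_conjTranspose_mul_self _
  -- Part 2
  have sumM : (∑ k, pinvSqrt hS.isHermitian * (ρ k) ^ 2 * pinvSqrt hS.isHermitian)
      = U * Matrix.diagonal (fun i => ((g i * lam i * g i : ℝ) : ℂ)) * Uᴴ := by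
    rw [hPdef, ← Finset.sum_mul, ← Finset.mul_sum, spec, key, key]
    congr 2
    funext i
    push_cast
    ring
  have part2 : ((1 : Matrix n n ℂ) -
      ∑ k, pinvSqrt hS.isHermitian * (ρ k) ^ 2 * pinvSqrt hS.isHermitian).PosSemidef := by
    rw [sumM]
    have hone : (1 : Matrix n n ℂ)
        = U * Matrix.diagonal (fun _ : n => ((1 : ℝ) : ℂ)) * Uᴴ := by
      simp only [Complex.ofReal_one]
      rw [Matrix.diagonal_one, mul_one, hU2]
    have hds : Matrix.diagonal (fun _ : n => ((1 : ℝ) : ℂ))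
        - Matrix.diagonal (fun i => ((g i * lam i * g i : ℝ) : ℂ))
        = Matrix.diagonal (fun i => (((1 - g i * lam i * g i : ℝ)) : ℂ)) := by
      rw [Matrix.diagonal_sub]
      congr 1
      funext i
      push_cast
      simp [Pi.sub_apply]
    rw [hone, ← Matrix.sub_mul, ← Matrix.mul_sub, hds]
    apply psdU
    intro i
    have h1 : g i * lam i = Real.sqrt (lam i) := sqrt_inv_mul_self (hlm i)
    rw [hgdef] at h1 ⊢
    simp only
    rw [h1]
    rcases eq_or_lt_of_le (hlm i) with h | h
    · simp [← h]
    · rw [mul_inv_cancel₀ (ne_of_gt (Real.sqrt_pos.mpr h))]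
      norm_num
  refine ⟨part1, part2, ?_⟩
  -- Part 3
  have hsqrt : hS.sqrt = U * Matrix.diagonal (fun i => ((Real.sqrt (lam i) : ℝ) : ℂ)) * Uᴴ := rfl
  have hΛ : hS.sqrt.trace = ((∑ i, Real.sqrt (lam i) : ℝ) : ℂ) := by
    rw [hsqrt, trU]
    push_cast
    rfl
  have tsum : (∑ k, (pinvSqrt hS.isHermitian * (ρ k) ^ 2).trace)
      = ((∑ i, Real.sqrt (lam i) : ℝ) : ℂ) := by
    have h1 : (∑ k, (pinvSqrt hS.isHermitian * (ρ k) ^ 2).trace)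
        = (pinvSqrt hS.isHermitian * (∑ k, (ρ k) ^ 2)).trace := by
      rw [Finset.mul_sum, Matrix.trace_sum]
    rw [h1, hPdef, spec, key, trU]
    push_cast
    apply Finset.sum_congr rfl
    intro i _
    rw [← Complex.ofReal_mul, sqrt_inv_mul_self (hlm i)]
  have hcs : ∀ k, ((pinvSqrt hS.isHermitian * (ρ k) ^ 2).trace.re) ^ 2
      ≤ ((ρ k).trace.re) *
        ((pinvSqrt hS.isHermitian * (ρ k) ^ 2 * pinvSqrt hS.isHermitian * ρ k).trace.re)
      ∧ 0 ≤ (ρ k).trace.re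
      ∧ 0 ≤ (pinvSqrt hS.isHermitian * (ρ k) ^ 2 * pinvSqrt hS.isHermitian * ρ k).trace.re := by
    intro k
    set P := pinvSqrt hS.isHermitian with hP
    set R := (hρ k).sqrt with hRdef
    have hRH : Rᴴ = R := by
      rw [hRdef]; unfold Matrix.PosSemidef.sqrt
      exact (Matrix.PosSemidef.mul_mul_conjTranspose_same (Matrix.posSemidef_diagonal_iff.mpr (fun i => by simp [Complex.zero_le_real, Real.sqrt_nonneg])) _).1
    have hRR : R * R = ρ k := by
      have hV := Matrix.mem_unitaryGroup_iff'.mp (hρ k).1.eigenvectorUnitary.2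
      rw [hRdef]; unfold Matrix.PosSemidef.sqrt
      conv_rhs => rw [(hρ k).1.spectral_theorem]
      rw [Unitary.conjStarAlgAut_apply]
      simp only [mul_assoc]
      rw [← mul_assoc (star _ : Matrix n n ℂ) _, hV, one_mul, ← mul_assoc (diagonal _) (diagonal _), diagonal_mul_diagonal]
      congr 3
      funext i
      simp only [Function.comp_apply]
      rw [← RCLike.ofReal_mul, Real.mul_self_sqrt ((hρ k).eigenvalues_nonneg i)]
    have e1 : Rᴴ * R = ρ k := by rw [hRH, hRR]
    have e2 : Rᴴ * (R * (P * ρ k)) = ρ k * (P * ρ k) := by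
      rw [hRH, ← mul_assoc, hRR]
    have e2t : (ρ k * (P * ρ k)).trace = (P * (ρ k) ^ 2).trace := by
      rw [Matrix.trace_mul_comm, mul_assoc, ← pow_two]
    have e3 : (R * (P * ρ k))ᴴ * (R * (P * ρ k)) = (ρ k * P) * ρ k * (P * ρ k) := by
      rw [Matrix.conjTranspose_mul, Matrix.conjTranspose_mul, hRH, hPH.eq, (hρ k).1.eq]
      simp only [mul_assoc]
      rw [← mul_assoc R R, hRR]
    have e3m : (P * ρ k) * (ρ k * P) * ρ k = P * (ρ k) ^ 2 * P * ρ k := by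
      simp only [mul_assoc, pow_two]
    have e3t : ((ρ k * P) * ρ k * (P * ρ k)).trace = (P * (ρ k) ^ 2 * P * ρ k).trace := by
      rw [Matrix.trace_mul_cycle, e3m]
    have hcs0 := trace_cs' R (R * (P * ρ k))
    rw [e1, e2, e2t, e3, e3t] at hcs0
    refine ⟨hcs0, ?_, ?_⟩
    · have h := trace_conjTranspose_mul_self_re_nonneg' R
      rwa [e1] at h
    · have h := trace_conjTranspose_mul_self_re_nonneg' (R * (P * ρ k))
      rwa [e3, e3t] at h
  set Λ : ℝ := ∑ i, Real.sqrt (lam i) with hΛdef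
  have hΛtr : hS.sqrt.trace.re = Λ := by rw [hΛ]; exact Complex.ofReal_re _
  have hΛ0 : 0 ≤ Λ := Finset.sum_nonneg fun i _ => Real.sqrt_nonneg _
  have htsum : ∑ k, ((pinvSqrt hS.isHermitian * (ρ k) ^ 2).trace.re) = Λ := by
    rw [← Complex.re_sum, tsum, Complex.ofReal_re]
  set b : K → ℝ := fun k =>
    (pinvSqrt hS.isHermitian * (ρ k) ^ 2 * pinvSqrt hS.isHermitian * ρ k).trace.re with hbdef
  have hb0 : ∀ k, 0 ≤ b k := fun k => (hcs k).2.2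
  have ha0 : ∀ k, 0 ≤ ((ρ k).trace.re) := fun k => (hcs k).2.1
  have hsa : ∑ k, ((ρ k).trace.re) = 1 := by
    rw [← Complex.re_sum, hnorm]
    exact Complex.one_re
  have step1 : Λ ≤ ∑ k, Real.sqrt ((ρ k).trace.re) * Real.sqrt (b k) := by
    rw [← htsum]
    apply Finset.sum_le_sum
    intro k _
    calc (pinvSqrt hS.isHermitian * (ρ k) ^ 2).trace.re
        ≤ Real.sqrt (((pinvSqrt hS.isHermitian * (ρ k) ^ 2).trace.re) ^ 2) := by
          rw [Real.sqrt_sq_eq_abs]; exact le_abs_self _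
      _ ≤ Real.sqrt (((ρ k).trace.re) * b k) := Real.sqrt_le_sqrt (hcs k).1
      _ = Real.sqrt ((ρ k).trace.re) * Real.sqrt (b k) := Real.sqrt_mul (ha0 k) _
  have step2 : (∑ k, Real.sqrt ((ρ k).trace.re) * Real.sqrt (b k)) ^ 2
      ≤ (∑ k, ((ρ k).trace.re)) * (∑ k, b k) := by
    calc (∑ k, Real.sqrt ((ρ k).trace.re) * Real.sqrt (b k)) ^ 2
        ≤ (∑ k, (Real.sqrt ((ρ k).trace.re)) ^ 2) * (∑ k, (Real.sqrt (b k)) ^ 2) :=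
          Finset.sum_mul_sq_le_sq_mul_sq Finset.univ _ _
      _ = (∑ k, ((ρ k).trace.re)) * (∑ k, b k) := by
          congr 1
          · exact Finset.sum_congr rfl fun k _ => Real.sq_sqrt (ha0 k)
          · exact Finset.sum_congr rfl fun k _ => Real.sq_sqrt (hb0 k)
  have final : (∑ k, (pinvSqrt hS.isHermitian * (ρ k) ^ 2 * pinvSqrt hS.isHermitian *
      ρ k).trace).re = ∑ k, b k := Complex.re_sum _ _
  rw [hΛtr, final]
  calc Λ ^ 2 ≤ (∑ k, Real.sqrt ((ρ k).trace.re) * Real.sqrt (b k)) ^ 2 :=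
        pow_le_pow_left₀ hΛ0 step1 2
    _ ≤ (∑ k, ((ρ k).trace.re)) * (∑ k, b k) := step2
    _ = ∑ k, b k := by rw [hsa, one_mul]
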